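/- (Tangential approach of the MRPI barrier of the perfect SIR model.) Let γ > 0, β_max > 0 and I_max > 0. Suppose S, I : ℝ → ℝ are differentiable on a neighbourhood of t̄ and satisfy S'(t) = −β_max S(t) I(t) and I'(t) = β_max S(t) I(t) − γ I(t) there, with I(t̄) = I_max and S(t̄) = γ / β_max. Then there exists ε > 0 such that I(t) < I_max for all t ∈ (t̄ − ε, t̄); i.e. the barrier curve reaching the ultimate tangent point (γ/β_max, I_max) with the input β ≡ β_max lies in the open region {I < I_max} immediately before the tangency time. -/

import Mathlib

/-- Tangential approach of the MRPI barrier of the perfect SIR model: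
the barrier curve reaching the ultimate tangent point `(γ/β_max, I_max)` with
input `β ≡ β_max` satisfies `I(t) < I_max` immediately before the tangency time. -/
theorem sir_mrpi_barrier_tangential_approach
    (γ βmax Imax tbar : ℝ)
    (hγ : 0 < γ) (hβmax : 0 < βmax) (hImax : 0 < Imax)
    (S I : ℝ → ℝ)
    (hS : ∀ᶠ t in nhds tbar, HasDerivAt S (-(βmax * S t * I t)) t)
    (hI : ∀ᶠ t in nhds tbar, HasDerivAt I (βmax * S t * I t - γ * I t) t)
    (hItan : I tbar = Imax) (hStan : S tbar = γ / βmax) :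
    ∃ ε > 0, ∀ t ∈ Set.Ioo (tbar - ε) tbar, I t < Imax := by
  set g : ℝ → ℝ := fun t => βmax * S t * I t - γ * I t with hg
  -- derivative facts near tbar
  obtain ⟨δ, hδpos, hδ⟩ := Metric.eventually_nhds_iff.mp (hS.and hI)
  have hS0 : HasDerivAt S (-(βmax * S tbar * I tbar)) tbar :=
    (hδ (by simpa using hδpos)).1
  have hI0 : HasDerivAt I (βmax * S tbar * I tbar - γ * I tbar) tbar :=
    (hδ (by simpa using hδpos)).2
  have hg0 : g tbar = 0 := by
    simp only [hg, hItan, hStan]; field_simp; ring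
  -- derivative of g at tbar
  have hgd : HasDerivAt g
      (βmax * ((-(βmax * S tbar * I tbar)) * I tbar
        + S tbar * (βmax * S tbar * I tbar - γ * I tbar))
        - γ * (βmax * S tbar * I tbar - γ * I tbar)) tbar := by
    have h1 := ((hS0.mul hI0).const_mul βmax).sub (hI0.const_mul γ)
    simpa [hg, mul_assoc, Pi.sub_def] using h1
  set d : ℝ := βmax * ((-(βmax * S tbar * I tbar)) * I tbar
        + S tbar * (βmax * S tbar * I tbar - γ * I tbar))
        - γ * (βmax * S tbar * I tbar - γ * I tbar) with hd
  have hdneg : d < 0 := by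
    have key : βmax * (γ / βmax) = γ := by field_simp
    rw [hd, hItan, hStan, key]
    have h2 : γ * Imax - γ * Imax = 0 := by ring
    rw [h2]
    have : βmax * (-(γ * Imax) * Imax + γ / βmax * 0) - γ * 0
        = -(βmax * γ * (Imax * Imax)) := by ring
    rw [this]
    nlinarith [mul_pos (mul_pos hβmax hγ) (mul_pos hImax hImax)]
  -- slope of g near tbar is negative
  have hslope := hasDerivAt_iff_tendsto_slope.mp hgd
  have hev : ∀ᶠ t in nhdsWithin tbar {tbar}ᶜ, slope g tbar t < 0 :=
    hslope.eventually (gt_mem_nhds hdneg)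
  rw [eventually_nhdsWithin_iff] at hev
  obtain ⟨ε', hε'pos, hε'⟩ := Metric.eventually_nhds_iff.mp hev
  refine ⟨min δ ε', lt_min hδpos hε'pos, ?_⟩
  rintro t ⟨ht1, ht2⟩
  have htδ : tbar - t < δ := by
    have := min_le_left δ ε'; linarith
  have htε' : tbar - t < ε' := by
    have := min_le_right δ ε'; linarith
  -- MVT on [t, tbar]
  have hcont : ContinuousOn I (Set.Icc t tbar) := by
    intro x hx
    have hxδ : dist x tbar < δ := by
      rw [Real.dist_eq, abs_lt]
      constructor <;> [skip; skip] <;>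
        · rcases hx with ⟨hx1, hx2⟩; linarith
    exact ((hδ hxδ).2.continuousAt).continuousWithinAt
  have hderiv : ∀ x ∈ Set.Ioo t tbar, HasDerivAt I (g x) x := by
    intro x hx
    have hxδ : dist x tbar < δ := by
      rw [Real.dist_eq, abs_lt]
      rcases hx with ⟨hx1, hx2⟩
      constructor <;> linarith
    exact (hδ hxδ).2
  obtain ⟨c, hc, hceq⟩ := exists_hasDerivAt_eq_slope I g ht2 hcont hderiv
  have hcne : c ≠ tbar := ne_of_lt hc.2
  have hcd : dist c tbar < ε' := by
    rw [Real.dist_eq, abs_lt]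
    rcases hc with ⟨hc1, hc2⟩
    constructor <;> linarith
  have hslc : slope g tbar c < 0 := hε' hcd hcne
  rw [slope_def_field, hg0] at hslc
  have hgcpos : 0 < g c := by
    rw [sub_zero] at hslc
    rcases div_neg_iff.mp hslc with ⟨h1, h2⟩ | ⟨h1, h2⟩
    · linarith [hc.2]
    · exact absurd h2 (by linarith [hc.2])
  rw [hItan] at hceq
  have : g c = (Imax - I t) / (tbar - t) := hceq
  have hq : 0 < (Imax - I t) / (tbar - t) := this ▸ hgcpos
  rcases div_pos_iff.mp hq with ⟨h1, h2⟩ | ⟨h1, h2⟩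
  · linarith
  · linarith
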